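/- Let n ≥ 2 and let f : {-1,1}^n → {-1,1} be locally (1/n)-stable, i.e., every point x has exactly one neighbor y with f(y) = f(x). Then there exist an index i ∈ {1,…,n} and a sign ε ∈ {-1,1} such that f(x) = ε·∏_{j ≠ i} x_j for all x ∈ {-1,1}^n; that is, f is the parity function on n − 1 variables up to isomorphism. -/

import Mathlib

/-- A point of the Boolean hypercube `{-1,1}^n`, encoded inside `Fin n → ℤ`. -/
def IsPMOne {n : ℕ} (x : Fin n → ℤ) : Prop := ∀ i, x i = 1 ∨ x i = -1

namespace Stmt13Aux

variable {n : ℕ}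

def flp (i : Fin n) (x : Fin n → ℤ) : Fin n → ℤ := Function.update x i (-(x i))

lemma flip_apply (i : Fin n) (x : Fin n → ℤ) (j : Fin n) :
    flp i x j = if j = i then -(x i) else x j := by
  simp [flp, Function.update_apply]

lemma flip_flip (i : Fin n) (x : Fin n → ℤ) : flp i (flp i x) = x := by
  funext j; by_cases h : j = i <;> simp [flip_apply, h]

lemma flip_comm {i l : Fin n} (h : i ≠ l) (x : Fin n → ℤ) :
    flp i (flp l x) = flp l (flp i x) := by
  funext j
  by_cases h1 : j = i <;> by_cases h2 : j = l <;>
    simp_all [flip_apply, h, h.symm]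

lemma pm_flip {x : Fin n → ℤ} (hx : IsPMOne x) (i : Fin n) : IsPMOne (flp i x) := by
  intro j
  rw [flip_apply]
  split_ifs with h
  · rcases hx i with h1 | h1 <;> rw [h1] <;> simp
  · exact hx j

end Stmt13Aux

open Stmt13Aux in
theorem stmt_13 (n : ℕ) (hn : 2 ≤ n) (f : (Fin n → ℤ) → ℤ)
    (hrange : ∀ x : Fin n → ℤ, IsPMOne x → (f x = 1 ∨ f x = -1))
    -- `f` is locally `1/n`-stable: every cube point has exactly one neighbor
    -- on which `f` takes the same value
    (hstable : ∀ x : Fin n → ℤ, IsPMOne x →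
      (Finset.univ.filter fun i => f (Function.update x i (-(x i))) = f x).card = 1) :
    ∃ (i : Fin n) (ε : ℤ), (ε = 1 ∨ ε = -1) ∧
      ∀ x : Fin n → ℤ, IsPMOne x → f x = ε * ∏ j ∈ Finset.univ.erase i, x j := by
  -- uniqueness and existence of stable direction
  have huniq : ∀ x : Fin n → ℤ, IsPMOne x → ∀ l m : Fin n,
      f (flp l x) = f x → f (flp m x) = f x → l = m := by
    intro x hx l m hl hm
    have hcard := hstable x hx
    rw [Finset.card_eq_one] at hcard
    obtain ⟨a, ha⟩ := hcard
    have hl' : l ∈ Finset.univ.filter fun i => f (Function.update x i (-(x i))) = f x := by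
      simp only [Finset.mem_filter, Finset.mem_univ, true_and]; exact hl
    have hm' : m ∈ Finset.univ.filter fun i => f (Function.update x i (-(x i))) = f x := by
      simp only [Finset.mem_filter, Finset.mem_univ, true_and]; exact hm
    rw [ha, Finset.mem_singleton] at hl' hm'
    rw [hl', hm']
  have hex : ∀ x : Fin n → ℤ, IsPMOne x → ∃ l : Fin n, f (flp l x) = f x := by
    intro x hx
    have hcard := hstable x hx
    rw [Finset.card_eq_one] at hcard
    obtain ⟨a, ha⟩ := hcard
    refine ⟨a, ?_⟩
    have : a ∈ Finset.univ.filter fun i => f (Function.update x i (-(x i))) = f x := by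
      rw [ha]; exact Finset.mem_singleton_self a
    simpa [flp] using this
  have hneg : ∀ x : Fin n → ℤ, IsPMOne x → ∀ l : Fin n,
      f (flp l x) ≠ f x → f (flp l x) = -f x := by
    intro x hx l hne
    rcases hrange x hx with h1 | h1 <;>
      rcases hrange _ (pm_flip hx l) with h2 | h2 <;> omega
  -- the stable direction is invariant under flips
  have step : ∀ x : Fin n → ℤ, IsPMOne x → ∀ g : Fin n, f (flp g x) = f x →
      ∀ l : Fin n, f (flp g (flp l x)) = f (flp l x) := by
    intro x hx g hg l
    by_cases hlg : l = g
    · subst hlg; rw [Stmt13Aux.flip_flip]; exact hg.symm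
    · by_contra hcon
      have hly : f (flp l x) ≠ f x := fun h => hlg (huniq x hx l g h hg)
      have hy : IsPMOne (flp l x) := pm_flip hx l
      have h1 : f (flp g (flp l x)) = -f (flp l x) := hneg _ hy g hcon
      have h2 : f (flp l x) = -f x := hneg x hx l hly
      have hz : IsPMOne (flp g x) := pm_flip hx g
      have e1 : f (flp l (flp g x)) = f (flp g x) := by
        rw [← flip_comm (fun h => hlg h.symm) x]
        · rw [h1, h2, hg]; ring
      have e2 : f (flp g (flp g x)) = f (flp g x) := by rw [Stmt13Aux.flip_flip, hg]
      exact hlg (huniq _ hz l g e1 e2)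
  -- connectivity induction
  have conn : ∀ P : (Fin n → ℤ) → Prop,
      (∀ x, IsPMOne x → P x → ∀ l, P (flp l x)) → P (fun _ => 1) →
      ∀ x, IsPMOne x → P x := by
    intro P hstep h0
    have main : ∀ k (x : Fin n → ℤ), IsPMOne x →
        (Finset.univ.filter fun j => x j = -1).card = k → P x := by
      intro k
      induction k with
      | zero =>
        intro x hx hc
        have hxeq : x = fun _ => 1 := by
          funext j
          rcases hx j with h | h
          · exact h
          · exfalso
            have hmem : j ∈ Finset.univ.filter fun j => x j = -1 := by simp [h]
            rw [Finset.card_eq_zero] at hc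
            rw [hc] at hmem
            exact absurd hmem (Finset.notMem_empty j)
        rw [hxeq]; exact h0
      | succ k ih =>
        intro x hx hc
        have hne : (Finset.univ.filter fun j => x j = -1).Nonempty := by
          rw [← Finset.card_pos, hc]; omega
        obtain ⟨j, hj⟩ := hne
        have hxj : x j = -1 := by simpa using hj
        have hy : IsPMOne (flp j x) := pm_flip hx j
        have hfy : (Finset.univ.filter fun j' => flp j x j' = -1)
            = (Finset.univ.filter fun j' => x j' = -1).erase j := by
          ext j'
          by_cases h : j' = j
          · subst h
            simp [flip_apply, hxj]
          · simp [flip_apply, h, Finset.mem_erase]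
        have hcy : (Finset.univ.filter fun j' => flp j x j' = -1).card = k := by
          rw [hfy, Finset.card_erase_of_mem hj, hc]; omega
        have hPy := ih _ hy hcy
        have := hstep _ hy hPy j
        rwa [Stmt13Aux.flip_flip] at this
    intro x hx
    exact main _ x hx rfl
  -- set up the dictator direction
  have hx0 : IsPMOne (fun _ : Fin n => (1 : ℤ)) := fun j => Or.inl rfl
  obtain ⟨i, hi⟩ := hex _ hx0
  have hconst : ∀ x, IsPMOne x → f (flp i x) = f x :=
    conn (fun x => f (flp i x) = f x) (fun x hx hP l => step x hx i hP l) hi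
  refine ⟨i, f (fun _ => 1), hrange _ hx0, ?_⟩
  refine conn (fun x => f x = f (fun _ => 1) * ∏ j ∈ Finset.univ.erase i, x j) ?_ ?_
  · intro x hx hP l
    by_cases hl : l = i
    · subst hl
      show f (flp l x) = _
      rw [hconst x hx]
      have hpr : ∏ j ∈ Finset.univ.erase l, flp l x j = ∏ j ∈ Finset.univ.erase l, x j := by
        apply Finset.prod_congr rfl
        intro j hj
        rw [flip_apply, if_neg (Finset.mem_erase.mp hj).1]
      rw [hpr]; exact hP
    · have hfl : f (flp l x) ≠ f x := fun h => hl (huniq x hx l i h (hconst x hx))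
      have h2 := hneg x hx l hfl
      have hlmem : l ∈ Finset.univ.erase i := Finset.mem_erase.mpr ⟨hl, Finset.mem_univ l⟩
      have hprod : ∏ j ∈ Finset.univ.erase i, flp l x j
          = -∏ j ∈ Finset.univ.erase i, x j := by
        rw [show flp l x = Function.update x l (-(x l)) from rfl,
          Finset.prod_update_of_mem hlmem, ← Finset.mul_prod_erase _ _ hlmem, Finset.erase_eq, Finset.erase_eq]
        ring
      show f (flp l x) = _
      rw [h2, hP, hprod]; ring
  · simp
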